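/- Let C be a category with pullbacks. For any f : X ⟶ Y and g : Z ⟶ Y in C, let W = X ×_Y Z be a pullback with projections pr₁ : W ⟶ X and pr₂ : W ⟶ Z. Then the square in the category of presheaves of sets on C with top arrow ṽ(pr₂, g) : Yo(W) ⟶ Ũ_C, left arrow Yo(pr₁) : Yo(W) ⟶ Yo(X), right arrow p_C : Ũ_C ⟶ U_C and bottom arrow v(f, g) : Yo(X) ⟶ U_C is a pullback square. In particular, the pullback of p_C along any morphism from a representable presheaf to U_C is representable. -/

import Mathlib

open CategoryTheory Limits Opposite

universe u

variable (C : Type u) [SmallCategory C]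

/-- The presheaf `U_C` with `U_C(X) = {(f, g) : f : X ⟶ Y, g : Z ⟶ Y}`,
encoded as `⟨Y, Z, f, g⟩`, with restriction `(f, g) ↦ (a ≫ f, g)`. -/
def UPsh : Cᵒᵖ ⥤ Type u where
  obj X := Σ (Y : C) (Z : C), (unop X ⟶ Y) × (Z ⟶ Y)
  map a := TypeCat.ofHom fun s => ⟨s.1, s.2.1, a.unop ≫ s.2.2.1, s.2.2.2⟩
  map_id := by intro X; refine ConcreteCategory.hom_ext _ _ fun s => ?_; simp
  map_comp := by intro X Y Z a b; refine ConcreteCategory.hom_ext _ _ fun s => ?_; simp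

/-- The presheaf `Ũ_C` with `Ũ_C(X) = {(f', g) : f' : X ⟶ Z, g : Z ⟶ Y}`,
encoded as `⟨Z, Y, f', g⟩`, with restriction `(f', g) ↦ (a ≫ f', g)`. -/
def UtildePsh : Cᵒᵖ ⥤ Type u where
  obj X := Σ (Z : C) (Y : C), (unop X ⟶ Z) × (Z ⟶ Y)
  map a := TypeCat.ofHom fun s => ⟨s.1, s.2.1, a.unop ≫ s.2.2.1, s.2.2.2⟩
  map_id := by intro X; refine ConcreteCategory.hom_ext _ _ fun s => ?_; simp
  map_comp := by intro X Y Z a b; refine ConcreteCategory.hom_ext _ _ fun s => ?_; simp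

/-- The morphism of presheaves `p_C : Ũ_C ⟶ U_C`, `(f', g) ↦ (f' ≫ g, g)`. -/
def pPsh : UtildePsh C ⟶ UPsh C where
  app X := TypeCat.ofHom fun s => ⟨s.2.1, s.1, s.2.2.1 ≫ s.2.2.2, s.2.2.2⟩
  naturality := by intro X Y a; refine ConcreteCategory.hom_ext _ _ fun s => ?_; exact Sigma.ext rfl (heq_of_eq (Sigma.ext rfl (heq_of_eq (Prod.ext (Category.assoc _ _ _) rfl))))

/-- For a category `C` with pullbacks and a pullback square `W = X ×_Y Z` with
projections `pr₁ : W ⟶ X`, `pr₂ : W ⟶ Z` over `f : X ⟶ Y`, `g : Z ⟶ Y`, the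
square in presheaves with top `ṽ(pr₂, g) : Yo(W) ⟶ Ũ_C`, left `Yo(pr₁)`, right
`p_C : Ũ_C ⟶ U_C` and bottom `v(f, g) : Yo(X) ⟶ U_C` is a pullback square
(so the pullback of `p_C` along any morphism from a representable is representable). -/
theorem uPsh_pullback_representable {C : Type u} [SmallCategory C] [HasPullbacks C]
    {X Y Z W : C} (f : X ⟶ Y) (g : Z ⟶ Y) (pr₁ : W ⟶ X) (pr₂ : W ⟶ Z)
    (h : IsPullback pr₁ pr₂ f g) :
    IsPullback (yonedaEquiv.symm (⟨Z, Y, pr₂, g⟩ : (UtildePsh C).obj (op W)))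
      (yoneda.map pr₁) (pPsh C)
      (yonedaEquiv.symm (⟨Y, Z, f, g⟩ : (UPsh C).obj (op X))) := by
  have comm : yonedaEquiv.symm (⟨Z, Y, pr₂, g⟩ : (UtildePsh C).obj (op W)) ≫ pPsh C =
      yoneda.map pr₁ ≫ yonedaEquiv.symm (⟨Y, Z, f, g⟩ : (UPsh C).obj (op X)) := by
    ext U (k : unop U ⟶ W)
    show (pPsh C).app U ((yonedaEquiv.symm _).app U k) =
      (yonedaEquiv.symm _).app U (k ≫ pr₁)
    show (⟨Y, Z, (k ≫ pr₂) ≫ g, g⟩ : (Y : C) × (Z : C) × (unop U ⟶ Y) × (Z ⟶ Y)) =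
      ⟨Y, Z, (k ≫ pr₁) ≫ f, g⟩
    rw [Category.assoc, Category.assoc, h.w]
  refine IsPullback.of_isLimit' ⟨comm⟩ ?_
  apply evaluationJointlyReflectsLimits
  intro U
  show IsLimit (((evaluation Cᵒᵖ (Type u)).obj U).mapCone (PullbackCone.mk _ _ comm))
  refine (isLimitMapConePullbackConeEquiv ((evaluation _ _).obj U) comm).symm ?_
  refine (PullbackCone.isLimitEquivBijective _).symm ?_
  constructor
  · intro k₁ k₂ hk
    have h1 := congrArg (fun p => p.1.1) hk
    have h2 := congrArg (fun p => p.1.2) hk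
    dsimp only [PullbackCone.toPullbackObj, PullbackCone.mk_fst, PullbackCone.mk_snd,
      evaluation_obj_map] at h1 h2
    change (⟨Z, Y, (k₁ : unop U ⟶ W) ≫ pr₂, g⟩ : (Z : C) × (Y : C) × (unop U ⟶ Z) × (Z ⟶ Y)) =
      ⟨Z, Y, (k₂ : unop U ⟶ W) ≫ pr₂, g⟩ at h1
    dsimp only [yoneda_map_app] at h2
    obtain ⟨-, h1⟩ := Sigma.mk.inj_iff.mp h1
    rw [heq_iff_eq] at h1
    obtain ⟨-, h1⟩ := Sigma.mk.inj_iff.mp h1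
    rw [heq_iff_eq] at h1
    exact h.hom_ext h2 (congrArg Prod.fst h1)
  · rintro ⟨⟨s, k⟩, hsk⟩
    have hsk' : (pPsh C).app U s = (UPsh C).map k.op (⟨Y, Z, f, g⟩ : (UPsh C).obj (op X)) := by
      exact hsk
    obtain ⟨Z', Y', f', g'⟩ := s
    dsimp only [pPsh, UPsh, Quiver.Hom.unop_op] at hsk'
    obtain ⟨h1, h2⟩ := Sigma.mk.inj_iff.mp hsk'
    subst h1
    rw [heq_iff_eq] at h2
    obtain ⟨h3, h4⟩ := Sigma.mk.inj_iff.mp h2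
    subst h3
    rw [heq_iff_eq] at h4
    obtain ⟨h5, h6⟩ := Prod.mk_inj.mp h4
    subst h6
    refine ⟨h.lift k f' h5.symm, Subtype.ext (Prod.ext ?_ ?_)⟩
    · dsimp only [PullbackCone.toPullbackObj, PullbackCone.mk_fst, evaluation_obj_map]
      show (⟨Z', Y', h.lift k f' h5.symm ≫ pr₂, g'⟩ : (Z : C) × (Y : C) × (unop U ⟶ Z) × (Z ⟶ Y)) =
        ⟨Z', Y', f', g'⟩
      rw [h.lift_snd k f' h5.symm]
    · exact h.lift_fst k f' h5.symm
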